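/- Let Y, Z be metric spaces and H : Z → Y a Lipschitz homeomorphism with Lipschitz inverse. If P : Z → Z is a homeomorphism with the bounded shadowing property, then H ∘ P ∘ H^{-1} : Y → Y also has the bounded shadowing property. -/

import Mathlib

set_option synthInstance.maxHeartbeats 1000000

/-- A homeomorphism `g` of a metric space has the bounded shadowing property if for every
`ε > 0` there is `δ > 0` such that every bounded `δ`-pseudo orbit `(x n)_{n ∈ ℤ}` is
`ε`-shadowed by a true orbit of `g`. -/
def BoundedShadowing {Z : Type*} [MetricSpace Z] (g : Z ≃ₜ Z) : Prop :=
  ∀ ε > (0 : ℝ), ∃ δ > (0 : ℝ), ∀ x : ℤ → Z,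
    (∀ n : ℤ, dist (g (x n)) (x (n + 1)) ≤ δ) →
    Bornology.IsBounded (Set.range x) →
    ∃ y : Z, ∀ n : ℤ, dist ((g.toEquiv ^ n) y) (x n) ≤ ε

private lemma bs_conj_zpow {Z Y : Type*} [MetricSpace Z] [MetricSpace Y]
    (Hm : Z ≃ₜ Y) (P : Z ≃ₜ Z) (n : ℤ) (y : Y) :
    (((Hm.symm.trans P).trans Hm).toEquiv ^ n) y = Hm ((P.toEquiv ^ n) (Hm.symm y)) := by
  induction n using Int.induction_on with
  | zero => simp
  | succ k ih =>
      have h1 : ((Hm.symm.trans P).trans Hm).toEquiv ^ ((k : ℤ) + 1)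
          = ((Hm.symm.trans P).trans Hm).toEquiv * ((Hm.symm.trans P).trans Hm).toEquiv ^ (k : ℤ) := by
        rw [add_comm, zpow_add, zpow_one]
      have h2 : P.toEquiv ^ ((k : ℤ) + 1) = P.toEquiv * P.toEquiv ^ (k : ℤ) := by
        rw [add_comm, zpow_add, zpow_one]
      rw [h1, h2]
      simp only [Equiv.Perm.mul_apply, ih]
      simp [Homeomorph.trans]
  | pred k ih =>
      have h1 : ((Hm.symm.trans P).trans Hm).toEquiv ^ (-(k : ℤ) - 1)
          = (((Hm.symm.trans P).trans Hm).toEquiv)⁻¹ * ((Hm.symm.trans P).trans Hm).toEquiv ^ (-(k : ℤ)) := by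
        rw [sub_eq_add_neg, add_comm, zpow_add, zpow_neg_one]
      have h2 : P.toEquiv ^ (-(k : ℤ) - 1) = (P.toEquiv)⁻¹ * P.toEquiv ^ (-(k : ℤ)) := by
        rw [sub_eq_add_neg, add_comm, zpow_add, zpow_neg_one]
      rw [h1, h2]
      simp only [Equiv.Perm.mul_apply, ih]
      simp [Homeomorph.trans, Equiv.Perm.inv_def]

/-- If `H : Z → Y` is a Lipschitz homeomorphism with Lipschitz inverse and `P : Z → Z`
is a homeomorphism with the bounded shadowing property, then `H ∘ P ∘ H⁻¹ : Y → Y`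
also has the bounded shadowing property. -/
theorem boundedShadowing_conj {Z Y : Type*} [MetricSpace Z] [MetricSpace Y]
    (Hm : Z ≃ₜ Y) (K K' : NNReal) (hH : LipschitzWith K Hm)
    (hH' : LipschitzWith K' Hm.symm)
    (P : Z ≃ₜ Z) (hP : BoundedShadowing P) :
    BoundedShadowing ((Hm.symm.trans P).trans Hm) := by
  intro ε hε
  set ε₀ : ℝ := ε / ((K : ℝ) + 1) with hε₀def
  have hK1 : (0 : ℝ) < (K : ℝ) + 1 := by positivity
  have hε₀ : 0 < ε₀ := by positivity
  obtain ⟨δ₀, hδ₀, hshad⟩ := hP ε₀ hε₀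
  set δ : ℝ := δ₀ / ((K' : ℝ) + 1) with hδdef
  have hK'1 : (0 : ℝ) < (K' : ℝ) + 1 := by positivity
  refine ⟨δ, by positivity, ?_⟩
  intro x hx hbd
  set z : ℤ → Z := fun n => Hm.symm (x n) with hz
  have hpseudo : ∀ n : ℤ, dist (P (z n)) (z (n + 1)) ≤ δ₀ := by
    intro n
    have key : P (z n) = Hm.symm (((Hm.symm.trans P).trans Hm) (x n)) := by
      simp [hz, Homeomorph.trans]
    rw [key]
    calc dist (Hm.symm (((Hm.symm.trans P).trans Hm) (x n))) (Hm.symm (x (n + 1)))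
        ≤ (K' : ℝ) * dist (((Hm.symm.trans P).trans Hm) (x n)) (x (n + 1)) := hH'.dist_le_mul _ _
      _ ≤ (K' : ℝ) * δ := by
          exact mul_le_mul_of_nonneg_left (hx n) K'.coe_nonneg
      _ ≤ ((K' : ℝ) + 1) * δ := by
          apply mul_le_mul_of_nonneg_right (by linarith) (by positivity)
      _ = δ₀ := by rw [hδdef]; field_simp
  have hbd' : Bornology.IsBounded (Set.range z) := by
    have : Set.range z = Hm.symm '' Set.range x := by
      rw [hz, ← Set.range_comp]; rfl
    rw [this]
    exact hH'.isBounded_image hbd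
  obtain ⟨y, hy⟩ := hshad z hpseudo hbd'
  refine ⟨Hm y, fun n => ?_⟩
  have hxz : x n = Hm (z n) := by simp [hz]
  rw [bs_conj_zpow, hxz]
  have : Hm.symm (Hm y) = y := Hm.symm_apply_apply y
  rw [this]
  calc dist (Hm ((P.toEquiv ^ n) y)) (Hm (z n))
      ≤ (K : ℝ) * dist ((P.toEquiv ^ n) y) (z n) := hH.dist_le_mul _ _
    _ ≤ (K : ℝ) * ε₀ := mul_le_mul_of_nonneg_left (hy n) K.coe_nonneg
    _ ≤ ((K : ℝ) + 1) * ε₀ := by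
        apply mul_le_mul_of_nonneg_right (by linarith) (le_of_lt hε₀)
    _ = ε := by rw [hε₀def]; field_simp
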